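/- For m ∈ N, the functional K ↦ Vol_n(K)^{nm-m} · Vol_{nm}(Π^{∘,m} K) on convex bodies in R^n is invariant under all invertible affine transformations of R^n. -/

import Mathlib

open MeasureTheory Set Pointwise Metric
open scoped RealInnerProductSpace ENNReal NNReal

noncomputable section

/-- `R^n` as Euclidean space. -/
abbrev En (n : ℕ) : Type := EuclideanSpace ℝ (Fin n)

/-- `(R^n)^m = R^{nm}` with its Euclidean structure. -/
abbrev Enm (n m : ℕ) : Type := PiLp 2 (fun _ : Fin m => En n)

instance (n m : ℕ) : MeasurableSpace (Enm n m) := MeasurableSpace.comap WithLp.ofLp MeasurableSpace.pi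
instance (n m : ℕ) : BorelSpace (Enm n m) := PiLp.borelSpace 2

/-- The negative part `t_- = max{0, -t}`. -/
def negpt (t : ℝ) : ℝ := max 0 (-t)

/-- The `m`-th higher-order difference body
`D^m(K) = {(x_1,…,x_m) : K ∩ ⋂ᵢ (xᵢ + K) ≠ ∅}`. -/
def higherDiff {n m : ℕ} (K : Set (En n)) : Set (Enm n m) :=
  {x | (K ∩ ⋂ i, (x i +ᵥ K)).Nonempty}

/-- The `m`-covariogram `g_{K,m}(x̄) = Vol_n(K ∩ ⋂ᵢ (xᵢ + K))`. -/
def covariogram {n m : ℕ} (K : Set (En n)) (x : Enm n m) : ℝ :=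
  (volume (K ∩ ⋂ i, (x i +ᵥ K))).toReal

/-- `C_θ̄ = conv([0,θ_1] ∪ ⋯ ∪ [0,θ_m])`. -/
def Cbody {n m : ℕ} (θ : Enm n m) : Set (En n) :=
  convexHull ℝ (insert 0 (Set.range fun i => θ i))

/-- Support function `h_K(u) = sup_{y ∈ K} ⟨u, y⟩`. -/
def suppFn {n : ℕ} (K : Set (En n)) (u : En n) : ℝ :=
  sSup ((fun y => ⟪u, y⟫) '' K)

/-- `n·V(K[n-1], L)`, the first variation of volume:
`nV(K[n-1],L) = d/dε Vol_n(K + εL)|_{ε=0⁺}`. -/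
def nMixed {n : ℕ} (K L : Set (En n)) : ℝ :=
  derivWithin (fun ε : ℝ => (volume (K + ε • L)).toReal) (Set.Ici 0) 0

/-- Support function of the higher-order projection body:
`h_{Π^m K}(θ̄) = n V(K[n-1], C_{-θ̄})`. -/
def projSupport {n : ℕ} (m : ℕ) (K : Set (En n)) (θ : Enm n m) : ℝ :=
  nMixed K (Cbody (-θ))

/-- The `m`-th higher-order projection body `Π^m K`. -/
def projBody {n : ℕ} (m : ℕ) (K : Set (En n)) : Set (Enm n m) :=
  {x | ∀ θ : Enm n m, ⟪x, θ⟫ ≤ projSupport m K θ}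

/-- The polar of the higher-order projection body, `Π^{∘,m} K = {h_{Π^m K} ≤ 1}`. -/
def polarProjBody {n : ℕ} (m : ℕ) (K : Set (En n)) : Set (Enm n m) :=
  {x | projSupport m K x ≤ 1}

/-- Support function of the higher-order centroid body. -/
def centroidSupport {n m : ℕ} (L : Set (Enm n m)) (θ : En n) : ℝ :=
  (volume L).toReal⁻¹ * ∫ x in L, (⨆ i, negpt ⟪(x : Enm n m) i, θ⟫)

/-- The `m`-th higher-order centroid body `Γ^m L`. -/
def centroidBody {n m : ℕ} (L : Set (Enm n m)) : Set (En n) :=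
  {y | ∀ θ : En n, ⟪y, θ⟫ ≤ centroidSupport L θ}

/-- Radial function of a star-shaped set. -/
def radialFn {V : Type*} [SMul ℝ V] (A : Set V) (y : V) : ℝ :=
  sSup {r : ℝ | 0 < r ∧ r • y ∈ A}

/-- `K` is an `n`-dimensional simplex. -/
def IsSimplexBody {n : ℕ} (K : Set (En n)) : Prop :=
  ∃ v : Fin (n + 1) → En n, AffineIndependent ℝ v ∧ K = convexHull ℝ (Set.range v)


/-! ### Auxiliary lemmas -/

section Aux

open Set

lemma dw_const_mul (f : ℝ → ℝ) (c : ℝ) (hc : 0 < c) :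
    derivWithin (fun x => c * f x) (Ici (0:ℝ)) 0 = c * derivWithin f (Ici 0) 0 := by
  by_cases h : DifferentiableWithinAt ℝ f (Ici (0:ℝ)) 0
  · exact derivWithin_const_mul c h
  · have h2 : ¬ DifferentiableWithinAt ℝ (fun x => c * f x) (Ici (0:ℝ)) 0 := by
      intro h2
      have := h2.const_mul c⁻¹
      simp only [← mul_assoc, inv_mul_cancel₀ hc.ne', one_mul] at this
      exact h this
    rw [derivWithin_zero_of_not_differentiableWithinAt h,
      derivWithin_zero_of_not_differentiableWithinAt h2, mul_zero]

lemma diffw_comp_mul {f : ℝ → ℝ} (c : ℝ) (hc : 0 < c)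
    (h : DifferentiableWithinAt ℝ f (Ici (0:ℝ)) 0) :
    DifferentiableWithinAt ℝ (fun x => f (c * x)) (Ici (0:ℝ)) 0 := by
  have hg : DifferentiableWithinAt ℝ (fun x : ℝ => c * x) (Ici 0) 0 :=
    (differentiable_id.const_mul c).differentiableAt.differentiableWithinAt
  have h' : DifferentiableWithinAt ℝ f (Ici (0:ℝ)) ((fun x : ℝ => c * x) 0) := by simpa using h
  exact DifferentiableWithinAt.comp (0:ℝ) h' hg (fun x hx => mul_nonneg hc.le hx)

lemma dw_comp_mul (f : ℝ → ℝ) (c : ℝ) (hc : 0 < c) :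
    derivWithin (fun x => f (c * x)) (Ici (0:ℝ)) 0 = c * derivWithin f (Ici 0) 0 := by
  by_cases h : DifferentiableWithinAt ℝ f (Ici (0:ℝ)) 0
  · have hg : HasDerivWithinAt (fun x : ℝ => c * x) c (Ici 0) 0 := by
      simpa using ((hasDerivAt_id (0:ℝ)).const_mul c).hasDerivWithinAt
    have hf : HasDerivWithinAt f (derivWithin f (Ici 0) 0) (Ici 0) ((fun x : ℝ => c * x) 0) := by
      simpa using h.hasDerivWithinAt
    have hcomp := HasDerivWithinAt.comp (0:ℝ) hf hg (fun x hx => mul_nonneg hc.le hx)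
    have heq : derivWithin (f ∘ (fun x : ℝ => c * x)) (Ici (0:ℝ)) 0
        = derivWithin f (Ici 0) 0 * c :=
      hcomp.derivWithin (uniqueDiffOn_Ici 0 0 Set.self_mem_Ici)
    rw [show (fun x : ℝ => f (c * x)) = f ∘ (fun x : ℝ => c * x) from rfl, heq, mul_comm]
  · have h2 : ¬ DifferentiableWithinAt ℝ (fun x => f (c * x)) (Ici (0:ℝ)) 0 := by
      intro h2
      have h3 := diffw_comp_mul c⁻¹ (by positivity) h2
      simp only [← mul_assoc, mul_inv_cancel₀ hc.ne', one_mul] at h3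
      exact h h3
    rw [derivWithin_zero_of_not_differentiableWithinAt h,
      derivWithin_zero_of_not_differentiableWithinAt h2, mul_zero]

lemma det_pi_map_pi {ι : Type*} [Fintype ι] [DecidableEq ι] {κ : Type*} [Fintype κ]
    [DecidableEq κ] {E : Type*} [AddCommGroup E] [Module ℝ E] (bE : Module.Basis κ ℝ E)
    (f : E →ₗ[ℝ] E) :
    LinearMap.det (LinearMap.pi (fun i : ι => f.comp (LinearMap.proj i)) :
      (∀ _ : ι, E) →ₗ[ℝ] (∀ _ : ι, E)) = (LinearMap.det f) ^ (Fintype.card ι) := by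
  classical
  let B : Module.Basis ((_ : ι) × κ) ℝ (∀ _ : ι, E) := Pi.basis (fun _ : ι => bE)
  let e : ((_ : ι) × κ) ≃ κ × ι :=
    Equiv.mk (fun p => (p.2, p.1)) (fun q => ⟨q.2, q.1⟩) (fun p => rfl) (fun q => rfl)
  rw [← LinearMap.det_toMatrix B, ← LinearMap.det_toMatrix bE]
  have key : LinearMap.toMatrix B B (LinearMap.pi (fun i : ι => f.comp (LinearMap.proj i)))
      = (Matrix.blockDiagonal (fun _ : ι => LinearMap.toMatrix bE bE f)).submatrix ⇑e ⇑e := by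
    ext ⟨j, i⟩ ⟨j', i'⟩
    simp only [LinearMap.toMatrix_apply, B, Pi.basis_repr, Matrix.submatrix_apply,
      Matrix.blockDiagonal_apply, e, Equiv.coe_fn_mk, LinearMap.pi_apply,
      LinearMap.coe_comp, Function.comp_apply, LinearMap.proj_apply, Pi.basis_apply]
    by_cases hj : j = j'
    · subst hj; simp
    · simp [Pi.single_eq_of_ne (Ne.symm hj), hj]
  rw [key, Matrix.det_submatrix_equiv_self e, Matrix.det_blockDiagonal]
  simp

/-- The block-diagonal linear map on `Enm n m` induced by `f` on each factor. -/
def Amap (n m : ℕ) (f : En n →ₗ[ℝ] En n) : Enm n m →ₗ[ℝ] Enm n m :=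
  (WithLp.linearEquiv 2 ℝ (∀ _ : Fin m, En n)).symm.toLinearMap ∘ₗ
    LinearMap.pi (fun i : Fin m => f.comp (LinearMap.proj i)) ∘ₗ
    (WithLp.linearEquiv 2 ℝ (∀ _ : Fin m, En n)).toLinearMap

lemma Amap_apply (n m : ℕ) (f : En n →ₗ[ℝ] En n) (x : Enm n m) (i : Fin m) :
    Amap n m f x i = f (x i) := rfl

lemma det_Amap (n m : ℕ) (f : En n →ₗ[ℝ] En n) :
    LinearMap.det (Amap n m f) = (LinearMap.det f) ^ m := by
  classical
  let ι : Enm n m ≃ₗ[ℝ] (∀ _ : Fin m, En n) := WithLp.linearEquiv 2 ℝ (∀ _ : Fin m, En n)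
  have h := LinearMap.det_conj (Amap n m f) ι
  have h2 : ((ι : Enm n m →ₗ[ℝ] (∀ _ : Fin m, En n)) ∘ₗ (Amap n m f) ∘ₗ
      (ι.symm : (∀ _ : Fin m, En n) →ₗ[ℝ] Enm n m))
      = (LinearMap.pi (fun i : Fin m => f.comp (LinearMap.proj i)) :
        (∀ _ : Fin m, En n) →ₗ[ℝ] (∀ _ : Fin m, En n)) := by
    apply LinearMap.ext; intro x; rfl
  rw [← h, h2]
  have h3 := det_pi_map_pi (ι := Fin m) (EuclideanSpace.basisFun (Fin n) ℝ).toBasis f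
  simpa using h3

lemma finrank_Enm (n m : ℕ) : Module.finrank ℝ (Enm n m) = m * n := by
  rw [(WithLp.linearEquiv 2 ℝ (∀ _ : Fin m, En n)).finrank_eq]
  rw [Module.finrank_pi_fintype]
  simp [finrank_euclideanSpace]

lemma vadd_add_sets {n : ℕ} (v : En n) (s t : Set (En n)) : (v +ᵥ s) + t = v +ᵥ (s + t) := by
  have h : ∀ X : Set (En n), v +ᵥ X = {v} + X := fun X => by
    rw [Set.singleton_add]; rfl
  rw [h, h, add_assoc]

lemma nMixed_vadd {n : ℕ} (v : En n) (S L : Set (En n)) :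
    nMixed (v +ᵥ S) L = nMixed S L := by
  unfold nMixed
  have h : (fun ε : ℝ => (volume ((v +ᵥ S) + ε • L)).toReal)
      = fun ε : ℝ => (volume (S + ε • L)).toReal := by
    funext ε
    rw [vadd_add_sets, measure_vadd (μ := volume) v (S + ε • L)]
  rw [h]

lemma polarProjBody_vadd {n m : ℕ} (v : En n) (S : Set (En n)) :
    polarProjBody m (v +ᵥ S) = polarProjBody m S := by
  unfold polarProjBody projSupport
  simp only [nMixed_vadd]

lemma image_add_sets {n : ℕ} (f : En n →ₗ[ℝ] En n) (s t : Set (En n)) :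
    ⇑f '' (s + t) = ⇑f '' s + ⇑f '' t := Set.image_add f

lemma image_smul_sets {n : ℕ} (f : En n →ₗ[ℝ] En n) (c : ℝ) (s : Set (En n)) :
    ⇑f '' (c • s) = c • (⇑f '' s) := Set.image_smul_comm _ _ _ (fun x => map_smul f c x)

lemma nMixed_image {n : ℕ} (A : En n ≃ₗ[ℝ] En n) (S L : Set (En n)) :
    nMixed (⇑A '' S) L
      = |LinearMap.det (A : En n →ₗ[ℝ] En n)| * nMixed S (⇑A.symm '' L) := by
  set c := |LinearMap.det (A : En n →ₗ[ℝ] En n)| with hcdef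
  have hc : 0 < c := abs_pos.2 (LinearEquiv.isUnit_det' A).ne_zero
  unfold nMixed
  have h : (fun ε : ℝ => (volume (⇑A '' S + ε • L)).toReal)
      = fun ε : ℝ => c * (volume (S + ε • (⇑A.symm '' L))).toReal := by
    funext ε
    have himg : ⇑A '' (S + ε • (⇑A.symm '' L)) = ⇑A '' S + ε • L := by
      rw [Set.image_add A, Set.image_smul_comm ⇑A ε _ (fun x => map_smul A ε x),
        Set.image_image]
      simp [LinearEquiv.apply_symm_apply]
    rw [← himg]
    have := Measure.addHaar_image_linearMap (volume) (A : En n →ₗ[ℝ] En n)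
      (S + ε • (⇑A.symm '' L))
    simp only [LinearEquiv.coe_coe] at this
    rw [this, ENNReal.toReal_mul, ENNReal.toReal_ofReal (abs_nonneg _)]
  rw [h]
  exact dw_const_mul _ c hc

lemma Cbody_image {n m : ℕ} (A : En n ≃ₗ[ℝ] En n) (θ : Enm n m) :
    ⇑A '' Cbody θ = Cbody (WithLp.toLp 2 (fun i => A (θ i))) := by
  unfold Cbody
  have h1 : ⇑A '' convexHull ℝ (insert 0 (Set.range fun i => θ i))
      = convexHull ℝ (⇑A '' insert 0 (Set.range fun i => θ i)) := by
    have := (A : En n →ₗ[ℝ] En n).image_convexHull (insert 0 (Set.range fun i => θ i))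
    simpa using this
  rw [h1, Set.image_insert_eq, map_zero, ← Set.range_comp]
  rfl

lemma Cbody_smul {n m : ℕ} (c : ℝ) (θ : Enm n m) :
    Cbody (WithLp.toLp 2 (fun i => c • θ i)) = c • Cbody θ := by
  unfold Cbody
  rw [← convexHull_smul, Set.smul_set_insert, smul_zero]
  congr 2
  exact (Set.smul_set_range c (fun i => θ i)).symm

lemma projSupport_image {n m : ℕ} (A : En n ≃ₗ[ℝ] En n) (S : Set (En n)) (θ : Enm n m) :
    projSupport m (⇑A '' S) θ
      = |LinearMap.det (A : En n →ₗ[ℝ] En n)|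
          * projSupport m S (WithLp.toLp 2 (fun i => A.symm (θ i))) := by
  unfold projSupport
  rw [nMixed_image]
  congr 2
  rw [show ⇑A.symm '' Cbody (-θ) = Cbody (WithLp.toLp 2 (fun i => A.symm ((-θ) i))) from Cbody_image A.symm (-θ)]
  have h : (WithLp.toLp 2 (fun i => A.symm ((-θ) i)) : Enm n m)
      = -(WithLp.toLp 2 (fun i => A.symm (θ i)) : Enm n m) := by
    refine PiLp.ext (fun i => ?_)
    show A.symm (-(θ i)) = -(A.symm (θ i))
    exact map_neg _ _
  rw [h]

lemma nMixed_smulL {n : ℕ} (S L : Set (En n)) (c : ℝ) (hc : 0 < c) :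
    nMixed S (c • L) = c * nMixed S L := by
  unfold nMixed
  have h : (fun ε : ℝ => (volume (S + ε • (c • L))).toReal)
      = fun ε : ℝ => (fun t : ℝ => (volume (S + t • L)).toReal) (c * ε) := by
    funext ε
    simp only
    rw [smul_smul, mul_comm]
  rw [h]
  exact dw_comp_mul (fun t : ℝ => (volume (S + t • L)).toReal) c hc

lemma projSupport_smul {n m : ℕ} (S : Set (En n)) (c : ℝ) (hc : 0 < c) (θ : Enm n m) :
    projSupport m S (c • θ) = c * projSupport m S θ := by
  unfold projSupport
  have h : Cbody (-(c • θ)) = c • Cbody (-θ) := by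
    have h0 : (-(c • θ)) = WithLp.toLp 2 (fun i => c • (-θ) i) := by
      refine PiLp.ext (fun i => ?_)
      show -(c • θ i) = c • (-(θ i))
      rw [smul_neg]
    rw [h0, Cbody_smul]
  rw [h]
  exact nMixed_smulL _ _ c hc

end Aux


lemma polarProjBody_image {n m : ℕ} (A : En n ≃ₗ[ℝ] En n) (K : Set (En n)) :
    polarProjBody m (⇑A '' K)
      = ⇑((|LinearMap.det (A : En n →ₗ[ℝ] En n)|⁻¹) • Amap n m (A : En n →ₗ[ℝ] En n))
          '' polarProjBody m K := by
  set c := |LinearMap.det (A : En n →ₗ[ℝ] En n)| with hcdef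
  have hc : 0 < c := abs_pos.2 (LinearEquiv.isUnit_det' A).ne_zero
  ext x
  simp only [polarProjBody, Set.mem_setOf_eq, Set.mem_image]
  rw [projSupport_image]
  constructor
  · intro hx
    refine ⟨c • WithLp.toLp 2 (fun i => A.symm (x i)), ?_, ?_⟩
    · show projSupport m K (c • WithLp.toLp 2 fun i => A.symm (x i)) ≤ 1
      rw [projSupport_smul _ c hc]
      exact hx
    · refine PiLp.ext (fun i => ?_)
      show c⁻¹ • (A ((c • WithLp.toLp 2 fun j => A.symm (x j)) i)) = x i
      show c⁻¹ • (A (c • A.symm (x i))) = x i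
      rw [_root_.map_smul, LinearEquiv.apply_symm_apply, smul_smul, inv_mul_cancel₀ hc.ne', one_smul]
  · rintro ⟨p, hp, rfl⟩
    rw [← projSupport_smul _ c hc]
    have harg : (c • WithLp.toLp 2 fun i =>
        A.symm ((⇑((c⁻¹ : ℝ) • Amap n m (A : En n →ₗ[ℝ] En n)) p) i)) = p := by
      refine PiLp.ext (fun i => ?_)
      show c • A.symm (c⁻¹ • (A (p i))) = p i
      rw [_root_.map_smul, LinearEquiv.symm_apply_apply, smul_smul, mul_inv_cancel₀ hc.ne', one_smul]
    rw [harg]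
    exact hp

/-- the Petty product `K ↦ Vol_n(K)^{nm-m}·Vol_{nm}(Π^{∘,m}K)`
is invariant under invertible affine transformations. -/
theorem petty_product_affine_invariant (n m : ℕ) (hn : 0 < n) (hm : 0 < m)
    (K : Set (En n)) (hK₁ : IsCompact K) (hK₂ : Convex ℝ K)
    (hK₃ : (interior K).Nonempty) (φ : En n ≃ᵃ[ℝ] En n) :
    (volume (⇑φ '' K)).toReal ^ (n * m - m)
        * (volume (polarProjBody m (⇑φ '' K))).toReal
      = (volume K).toReal ^ (n * m - m) * (volume (polarProjBody m K)).toReal := by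
  classical
  set A : En n ≃ₗ[ℝ] En n := φ.linear with hAdef
  set c := |LinearMap.det (A : En n →ₗ[ℝ] En n)| with hcdef
  have hc : 0 < c := abs_pos.2 (LinearEquiv.isUnit_det' A).ne_zero
  -- decompose φ as a translation following the linear part
  have hfun : ⇑φ = fun x => φ 0 +ᵥ (A x) := by
    funext x
    have hdec := φ.toAffineMap.decomp
    have h1 : φ x = φ.toAffineMap.linear x + φ.toAffineMap 0 := by
      conv_lhs => rw [show φ x = φ.toAffineMap x from rfl, hdec]
      rfl
    rw [h1]
    show φ.toAffineMap.linear x + φ 0 = φ 0 + A x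
    rw [add_comm]
    rfl
  have himg : ⇑φ '' K = φ 0 +ᵥ (⇑A '' K) := by
    conv_lhs => rw [hfun]
    rw [← Set.image_vadd, ← Set.image_image (fun y => φ 0 +ᵥ y) ⇑A]
  -- volume of the image body
  have hvolK : volume (⇑φ '' K) = ENNReal.ofReal c * volume K := by
    rw [himg, measure_vadd (μ := volume)]
    have := Measure.addHaar_image_linearMap (volume) (A : En n →ₗ[ℝ] En n) K
    simpa [hcdef] using this
  -- the polar projection body of the image
  have hpolar : polarProjBody m (⇑φ '' K)
      = ⇑((c⁻¹ : ℝ) • Amap n m (A : En n →ₗ[ℝ] En n)) '' polarProjBody m K := by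
    rw [himg, polarProjBody_vadd, polarProjBody_image]
  -- its volume
  have hdet : |LinearMap.det ((c⁻¹ : ℝ) • Amap n m (A : En n →ₗ[ℝ] En n))|
      = (c⁻¹) ^ (m * n) * c ^ m := by
    rw [LinearMap.det_smul, det_Amap, finrank_Enm, abs_mul, abs_pow, abs_pow, abs_inv,
      abs_abs, hcdef]
  have hvolP : volume (polarProjBody m (⇑φ '' K))
      = ENNReal.ofReal ((c⁻¹) ^ (m * n) * c ^ m) * volume (polarProjBody m K) := by
    rw [hpolar, Measure.addHaar_image_linearMap, hdet]
  -- put everything together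
  rw [hvolK, hvolP, ENNReal.toReal_mul, ENNReal.toReal_mul,
    ENNReal.toReal_ofReal hc.le, ENNReal.toReal_ofReal (by positivity)]
  set vK := (volume K).toReal
  set vP := (volume (polarProjBody m K)).toReal
  have hle : m ≤ n * m := Nat.le_mul_of_pos_left m hn
  have hkey : c ^ (n * m - m) * (c⁻¹ ^ (m * n) * c ^ m) = 1 := by
    rw [mul_comm (c⁻¹ ^ (m * n)) (c ^ m), ← mul_assoc, ← pow_add,
      Nat.sub_add_cancel hle, inv_pow, mul_comm (m : ℕ) n]
    exact mul_inv_cancel₀ (pow_ne_zero _ hc.ne')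
  calc (c * vK) ^ (n * m - m) * (c⁻¹ ^ (m * n) * c ^ m * vP)
      = (c ^ (n * m - m) * (c⁻¹ ^ (m * n) * c ^ m)) * (vK ^ (n * m - m) * vP) := by
        rw [mul_pow]; ring
    _ = vK ^ (n * m - m) * vP := by rw [hkey, one_mul]
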